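/- For all coprime positive integers m and r, the group presented by generators v, h with relators v·h·v⁻¹·h and v^{2m}·h^{−r} is a finite group of order 4·m·r. -/

import Mathlib

/-- Relators for the presentation `⟨v, h | vhv⁻¹h, v^{2m}h^{-r}⟩`,
with `v, h` the generators indexed by `0, 1 : Fin 2`. -/
def metacyclicRels (m : ℕ) (r : ℤ) : Set (FreeGroup (Fin 2)) :=
  {FreeGroup.of 0 * FreeGroup.of 1 * (FreeGroup.of 0)⁻¹ * FreeGroup.of 1,
   FreeGroup.of 0 ^ (2 * m) * FreeGroup.of 1 ^ (-r)}

open Multiplicative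

/-- Hom from `Multiplicative (ZMod n)` sending the generator to `g`, given `g ^ n = 1`. -/
def expHom {G : Type*} [Group G] (n : ℕ) (g : G) (hg : g ^ (n : ℤ) = 1) :
    Multiplicative (ZMod n) →* G :=
  ((MulEquiv.multiplicativeAdditive G).toMonoidHom).comp
    (AddMonoidHom.toMultiplicative
      (ZMod.lift n ⟨zmultiplesHom (Additive G) (Additive.ofMul g), by
        simpa [← ofMul_zpow] using congrArg Additive.ofMul hg⟩))

@[simp]
lemma expHom_intCast {G : Type*} [Group G] (n : ℕ) (g : G) (hg : g ^ (n : ℤ) = 1) (k : ℤ) :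
    expHom n g hg (Multiplicative.ofAdd ((k : ZMod n))) = g ^ k := by
  simp [expHom]

lemma zmodHom_ext {n : ℕ} {G : Type*} [Group G] {f g : Multiplicative (ZMod n) →* G}
    (h : f (ofAdd 1) = g (ofAdd 1)) : f = g := by
  refine MonoidHom.ext fun x => ?_
  obtain ⟨k, rfl⟩ : ∃ k : ℤ, ofAdd ((k : ZMod n)) = x := by
    obtain ⟨k, hk⟩ := ZMod.intCast_surjective (n := n) x.toAdd
    exact ⟨k, by rw [hk]; rfl⟩
  have hx : (ofAdd ((k : ZMod n))) = (ofAdd (1 : ZMod n)) ^ k := by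
    rw [← ofAdd_zsmul]
    norm_num
  rw [hx, map_zpow, map_zpow, h]

/-- Sign `(-1)^k` as an integer. -/
def sgn (k : ℤ) : ℤ := if Even k then 1 else -1

lemma sgn_add_one (k : ℤ) : sgn (k + 1) = - sgn k := by
  by_cases h : Even k <;> simp [sgn, h, Int.even_add_one]

lemma sgn_sub_one (k : ℤ) : sgn (k - 1) = - sgn k := by
  by_cases h : Even k <;> simp [sgn, h, Int.even_sub_one]

lemma invAut_zpow {G : Type*} [CommGroup G] (k : ℤ) (x : G) :
    ((MulEquiv.inv G : MulAut G) ^ k) x = x ^ sgn k := by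
  induction k using Int.induction_on generalizing x with
  | zero => simp [sgn]
  | succ n ih =>
      rw [zpow_add_one, MulAut.mul_apply, sgn_add_one]
      have : (MulEquiv.inv G : MulAut G) x = x⁻¹ := rfl
      rw [this, ih, zpow_neg, inv_zpow]
  | pred n ih =>
      rw [zpow_sub_one, MulAut.mul_apply, sgn_sub_one]
      have : ((MulEquiv.inv G : MulAut G)⁻¹) x = x⁻¹ := rfl
      rw [this, ih, zpow_neg, inv_zpow]

section PSide

variable (m r : ℕ)

local notation "P" => PresentedGroup (metacyclicRels m (r : ℤ))

def pv : PresentedGroup (metacyclicRels m (r : ℤ)) := .of 0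
def ph : PresentedGroup (metacyclicRels m (r : ℤ)) := .of 1

lemma relator_eq_one {w : FreeGroup (Fin 2)} (hw : w ∈ metacyclicRels m (r : ℤ)) :
    PresentedGroup.mk (metacyclicRels m (r : ℤ)) w = 1 :=
  (QuotientGroup.eq_one_iff _).mpr (Subgroup.subset_normalClosure hw)

lemma rel1 : pv m r * ph m r * (pv m r)⁻¹ * ph m r = 1 := by
  have := relator_eq_one m r (w := FreeGroup.of 0 * FreeGroup.of 1 * (FreeGroup.of 0)⁻¹ *
    FreeGroup.of 1) (Or.inl rfl)
  simpa [pv, ph, PresentedGroup.of] using this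

lemma rel2 : (pv m r) ^ (2 * m) * (ph m r) ^ (-(r:ℤ)) = 1 := by
  have := relator_eq_one m r (w := FreeGroup.of 0 ^ (2*m) * FreeGroup.of 1 ^ (-(r:ℤ)))
    (Or.inr rfl)
  simpa [pv, ph, PresentedGroup.of] using this

lemma rel2' : (pv m r) ^ ((2 * m : ℕ) : ℤ) = (ph m r) ^ (r:ℤ) := by
  have := rel2 m r
  rw [mul_eq_one_iff_eq_inv, ← zpow_neg, neg_neg, zpow_natCast] at this
  exact_mod_cast this

lemma conj_ph : pv m r * ph m r * (pv m r)⁻¹ = (ph m r)⁻¹ := by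
  have := rel1 m r
  rw [mul_eq_one_iff_eq_inv] at this
  exact this

lemma conj_ph_zpow (l : ℤ) : pv m r * (ph m r) ^ l * (pv m r)⁻¹ = (ph m r) ^ (-l) := by
  have : pv m r * (ph m r) ^ l * (pv m r)⁻¹ = (pv m r * ph m r * (pv m r)⁻¹) ^ l := by
    rw [conj_zpow]
  rw [this, conj_ph, inv_zpow, zpow_neg]

lemma ph_two_r : (ph m r) ^ ((2 * r : ℕ) : ℤ) = 1 := by
  have h1 : pv m r * (ph m r) ^ (r : ℤ) * (pv m r)⁻¹ = (ph m r) ^ (-(r:ℤ)) :=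
    conj_ph_zpow m r r
  rw [← rel2' m r] at h1
  have h2 : pv m r * (pv m r) ^ ((2*m : ℕ) : ℤ) * (pv m r)⁻¹ = (pv m r) ^ ((2*m : ℕ) : ℤ) := by
    group
  rw [h2, rel2' m r] at h1
  have key : (ph m r) ^ ((r:ℤ) + r) = 1 := by
    rw [zpow_add]
    nth_rewrite 2 [h1]
    group
  convert key using 2
  push_cast
  ring

lemma pv_four_m : (pv m r) ^ ((4 * m : ℕ) : ℤ) = 1 := by
  have : (pv m r) ^ ((4 * m : ℕ) : ℤ) = ((pv m r) ^ ((2 * m : ℕ) : ℤ)) ^ (2:ℤ) := by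
    rw [← zpow_mul]
    congr 1
    push_cast
    ring
  rw [this, rel2' m r, ← zpow_mul]
  have : (r : ℤ) * 2 = ((2 * r : ℕ) : ℤ) := by push_cast; ring
  rw [this, ph_two_r]

lemma aut_zpow_of_neg {G : Type*} [Group G] (σ : MulAut G) (f : ℤ → G)
    (hf : ∀ l, σ (f l) = f (-l)) (k l : ℤ) : (σ ^ k) (f l) = f (sgn k * l) := by
  induction k using Int.induction_on generalizing l with
  | zero => simp [sgn]
  | succ n ih =>
      rw [zpow_add_one, MulAut.mul_apply, hf, ih, sgn_add_one]
      ring_nf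
  | pred n ih =>
      have hinv : ∀ l, (σ⁻¹) (f l) = f (-l) := by
        intro l
        have := hf (-l)
        rw [neg_neg] at this
        rw [← this]
        simp
      rw [zpow_sub_one, MulAut.mul_apply, hinv, ih, sgn_sub_one]
      ring_nf

/-- conjugation by `pv^k`. -/
lemma conj_ph_zpow_zpow (k l : ℤ) :
    (pv m r) ^ k * (ph m r) ^ l * (pv m r) ^ (-k) = (ph m r) ^ (sgn k * l) := by
  have key := aut_zpow_of_neg (MulAut.conj (pv m r)) (fun l => (ph m r) ^ l)
    (fun l => by simpa [MulAut.conj_apply] using conj_ph_zpow m r l) k l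
  have e : (MulAut.conj (pv m r)) ^ k = MulAut.conj ((pv m r) ^ k) :=
    (map_zpow (MulAut.conj) (pv m r) k).symm
  rw [e] at key
  rw [zpow_neg]
  rw [show (MulAut.conj ((pv m r) ^ k)) ((ph m r) ^ l) =
    (pv m r) ^ k * (ph m r) ^ l * ((pv m r) ^ k)⁻¹ from rfl] at key
  exact key

end PSide

section QSide

variable (m r : ℕ)

local notation "NN" => Multiplicative (ZMod (2 * r))
local notation "HH" => Multiplicative (ZMod (4 * m))

lemma invAut_sq : (MulEquiv.inv NN : MulAut NN) ^ (2:ℤ) = 1 := by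
  ext x
  show (MulEquiv.inv NN : MulAut NN) ((MulEquiv.inv NN : MulAut NN) x) = x
  simp

lemma invAut_four_m : (MulEquiv.inv NN : MulAut NN) ^ ((4 * m : ℕ) : ℤ) = 1 := by
  have h : ((4 * m : ℕ) : ℤ) = 2 * (2 * m : ℤ) := by push_cast; ring
  rw [h, zpow_mul, invAut_sq, one_zpow]

def phi : HH →* MulAut NN := expHom (4 * m) (MulEquiv.inv NN) (invAut_four_m m r)

lemma phi_intCast (k : ℤ) :
    phi m r (ofAdd ((k : ZMod (4 * m)))) = (MulEquiv.inv NN : MulAut NN) ^ k :=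
  expHom_intCast _ _ _ k

lemma phi_even (k : ℤ) : phi m r (ofAdd (((2 * k : ℤ) : ZMod (4 * m)))) = 1 := by
  rw [phi_intCast, zpow_mul, invAut_sq, one_zpow]

local notation "G0" => SemidirectProduct NN HH (phi m r)

def zz : G0 := ⟨ofAdd ((-(r:ℤ) : ZMod (2 * r))), ofAdd (((2 * m : ℤ) : ZMod (4 * m)))⟩

lemma aa_sq : (ofAdd ((-(r:ℤ) : ZMod (2 * r)))) * (ofAdd ((-(r:ℤ) : ZMod (2 * r)))) = 1 := by
  rw [← ofAdd_add, ← ofAdd_zero]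
  congr 1
  have h0 : ((2 * r : ℕ) : ZMod (2 * r)) = 0 := ZMod.natCast_self _
  push_cast at h0 ⊢
  linear_combination -h0

lemma aa_inv : (ofAdd ((-(r:ℤ) : ZMod (2 * r))))⁻¹ = ofAdd ((-(r:ℤ) : ZMod (2 * r))) := by
  rw [inv_eq_iff_mul_eq_one, aa_sq]

lemma phi_fix_aa (c : HH) :
    phi m r c (ofAdd ((-(r:ℤ) : ZMod (2 * r)))) = ofAdd ((-(r:ℤ) : ZMod (2 * r))) := by
  obtain ⟨k, hk⟩ := ZMod.intCast_surjective (n := 4 * m) c.toAdd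
  have hc : c = ofAdd ((k : ZMod (4 * m))) := by rw [hk]; rfl
  rw [hc, phi_intCast, invAut_zpow]
  rcases Int.even_or_odd k with he | ho
  · have : sgn k = 1 := if_pos he
    rw [this, zpow_one]
  · have : sgn k = -1 := if_neg (Int.not_even_iff_odd.mpr ho)
    rw [this, zpow_neg, zpow_one, aa_inv]

lemma zz_mem_center : zz m r ∈ Subgroup.center G0 := by
  rw [Subgroup.mem_center_iff]
  intro g
  have hphi2m : phi m r (ofAdd (((2 * m : ℤ) : ZMod (4 * m)))) = 1 := phi_even m r m
  ext
  · show g.left * phi m r g.right (zz m r).left = (zz m r).left * phi m r (zz m r).right g.left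
    rw [show (zz m r).right = ofAdd (((2 * m : ℤ) : ZMod (4 * m))) from rfl, hphi2m]
    rw [show (zz m r).left = ofAdd ((-(r:ℤ) : ZMod (2 * r))) from rfl, phi_fix_aa]
    simp [mul_comm]
  · show g.right * (zz m r).right = (zz m r).right * g.right
    exact mul_comm _ _

lemma zz_sq : zz m r * zz m r = 1 := by
  have hphi2m : phi m r (ofAdd (((2 * m : ℤ) : ZMod (4 * m)))) = 1 := phi_even m r m
  ext
  · show (zz m r).left * phi m r (zz m r).right (zz m r).left = 1
    rw [show (zz m r).right = ofAdd (((2 * m : ℤ) : ZMod (4 * m))) from rfl, hphi2m]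
    exact aa_sq r
  · show (zz m r).right * (zz m r).right = 1
    rw [show (zz m r).right = ofAdd (((2 * m : ℤ) : ZMod (4 * m))) from rfl]
    rw [← ofAdd_add, ← ofAdd_zero]
    congr 1
    have h0 : ((4 * m : ℕ) : ZMod (4 * m)) = 0 := ZMod.natCast_self _
    push_cast at h0 ⊢
    linear_combination h0

lemma zz_ne_one (hm : 0 < m) : zz m r ≠ 1 := by
  intro hzz
  have h1 : (zz m r).right = 1 := by rw [hzz]; rfl
  rw [show (zz m r).right = ofAdd (((2 * m : ℤ) : ZMod (4 * m))) from rfl, ofAdd_eq_one] at h1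
  have h2 : ((2 * m : ℤ) : ZMod (4 * m)) = 0 := h1
  rw [show ((2 * m : ℤ) : ZMod (4*m)) = ((2 * m : ℕ) : ZMod (4*m)) by push_cast; ring] at h2
  rw [ZMod.natCast_eq_zero_iff] at h2
  have := Nat.le_of_dvd (by omega) h2
  omega

end QSide

section Iso

variable (m r : ℕ)

local notation "NN" => Multiplicative (ZMod (2 * r))
local notation "HH" => Multiplicative (ZMod (4 * m))
local notation "G0" => SemidirectProduct NN HH (phi m r)
local notation "P" => PresentedGroup (metacyclicRels m (r : ℤ))

def ZZ : Subgroup G0 := Subgroup.zpowers (zz m r)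

instance ZZ_normal : (ZZ m r).Normal := by
  constructor
  intro x hx g
  obtain ⟨k, rfl⟩ := hx
  have hc : zz m r ^ k ∈ Subgroup.center G0 :=
    Subgroup.zpow_mem _ (zz_mem_center m r) k
  have := (Subgroup.mem_center_iff.mp hc g).symm
  rw [show g * zz m r ^ k * g⁻¹ = zz m r ^ k from by
    rw [← this]; group]
  exact Subgroup.zpow_mem _ (Subgroup.mem_zpowers _) k

local notation "Q" => SemidirectProduct NN HH (phi m r) ⧸ ZZ m r

def fN : NN →* P := expHom (2 * r) (ph m r) (ph_two_r m r)
def fH : HH →* P := expHom (4 * m) (pv m r) (pv_four_m m r)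

lemma compat (c : HH) (n' : NN) :
    fN m r (phi m r c n') = fH m r c * fN m r n' * (fH m r c)⁻¹ := by
  obtain ⟨k, hk⟩ := ZMod.intCast_surjective (n := 4 * m) c.toAdd
  have hc : c = ofAdd ((k : ZMod (4 * m))) := by rw [hk]; rfl
  obtain ⟨l, hl⟩ := ZMod.intCast_surjective (n := 2 * r) n'.toAdd
  have hn : n' = ofAdd ((l : ZMod (2 * r))) := by rw [hl]; rfl
  subst hc hn
  have key := conj_ph_zpow_zpow m r k l
  rw [zpow_neg] at key
  rw [phi_intCast, invAut_zpow, fN, fH, map_zpow, expHom_intCast, expHom_intCast,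
    ← zpow_mul, mul_comm l (sgn k), ← key]

def psi0 : SemidirectProduct NN HH (phi m r) →* P :=
  SemidirectProduct.lift (fN m r) (fH m r) (fun c => by
    ext n'
    exact compat m r c n')

lemma psi0_zz : psi0 m r (zz m r) = 1 := by
  rw [zz, SemidirectProduct.mk_eq_inl_mul_inr, map_mul]
  rw [psi0, SemidirectProduct.lift_inl, SemidirectProduct.lift_inr]
  rw [show (-(r:ℤ) : ZMod (2*r)) = (((-(r:ℤ)) : ℤ) : ZMod (2*r)) from by push_cast; ring]
  rw [fN, fH, expHom_intCast, expHom_intCast]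
  have h2 : (pv m r) ^ (2 * (m:ℤ)) = (ph m r) ^ (r : ℤ) := by
    rw [show (2 * (m:ℤ)) = ((2 * m : ℕ) : ℤ) from by push_cast; ring, rel2']
  rw [h2, ← zpow_add]
  simp

def psi : Q →* P :=
  QuotientGroup.lift (ZZ m r) (psi0 m r) (by
    rintro x ⟨k, rfl⟩
    show psi0 m r (zz m r ^ k) = 1
    rw [map_zpow, psi0_zz, one_zpow])

def fgen : Fin 2 → Q :=
  ![QuotientGroup.mk (SemidirectProduct.inr (ofAdd (1 : ZMod (4 * m)))),
    QuotientGroup.mk (SemidirectProduct.inl (ofAdd (1 : ZMod (2 * r))))]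

lemma fgen_rels : ∀ w ∈ metacyclicRels m (r : ℤ), FreeGroup.lift (fgen m r) w = 1 := by
  have e2 : (1 : ZMod (2 * r)) = ((1 : ℤ) : ZMod (2 * r)) := by norm_num
  have e4 : (1 : ZMod (4 * m)) = ((1 : ℤ) : ZMod (4 * m)) := by norm_num
  rintro w (rfl | rfl)
  · -- v h v⁻¹ h
    simp only [map_mul, map_inv, FreeGroup.lift_apply_of, fgen, Matrix.cons_val_zero,
      Matrix.cons_val_one, Matrix.head_cons]
    rw [← QuotientGroup.mk_inv, ← QuotientGroup.mk_mul, ← QuotientGroup.mk_mul,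
      ← QuotientGroup.mk_mul]
    have key : (SemidirectProduct.inr (ofAdd (1 : ZMod (4 * m))) *
        SemidirectProduct.inl (ofAdd (1 : ZMod (2 * r))) *
        (SemidirectProduct.inr (ofAdd (1 : ZMod (4 * m))))⁻¹ *
        SemidirectProduct.inl (ofAdd (1 : ZMod (2 * r)))
        : SemidirectProduct NN HH (phi m r)) = 1 := by
      rw [← map_inv, ← SemidirectProduct.inl_aut, ← map_mul]
      have : phi m r (ofAdd (1 : ZMod (4 * m))) (ofAdd (1 : ZMod (2 * r)))
          = (ofAdd (1 : ZMod (2 * r)))⁻¹ := by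
        rw [e4, phi_intCast, zpow_one]
        rfl
      rw [this, inv_mul_cancel, map_one]
    rw [key]
    rfl
  · -- v^(2m) h^(-r)
    simp only [map_mul, map_zpow, map_pow, FreeGroup.lift_apply_of, fgen, Matrix.cons_val_zero,
      Matrix.cons_val_one, Matrix.head_cons]
    rw [← QuotientGroup.mk_pow, ← QuotientGroup.mk_zpow, ← QuotientGroup.mk_mul]
    rw [← map_pow, ← map_zpow]
    have hpow : (ofAdd (1 : ZMod (4 * m))) ^ (2 * m) = ofAdd (((2 * m : ℤ) : ZMod (4 * m))) := by
      rw [e4, ← ofAdd_nsmul]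
      congr 1
      rw [nsmul_eq_mul]
      push_cast
      ring
    have hzpow : (ofAdd (1 : ZMod (2 * r))) ^ (-(r:ℤ)) = ofAdd ((-(r:ℤ) : ZMod (2 * r))) := by
      rw [e2, ← ofAdd_zsmul]
      congr 1
      rw [zsmul_eq_mul]
      push_cast
      ring
    rw [hpow, hzpow]
    have key : (SemidirectProduct.inr (ofAdd (((2 * m : ℤ) : ZMod (4 * m)))) *
        SemidirectProduct.inl (ofAdd ((-(r:ℤ) : ZMod (2 * r))))
        : SemidirectProduct NN HH (phi m r)) = zz m r := by
      have h1 : SemidirectProduct.inr (ofAdd (((2 * m : ℤ) : ZMod (4 * m)))) *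
          SemidirectProduct.inl (ofAdd ((-(r:ℤ) : ZMod (2 * r)))) *
          SemidirectProduct.inr (ofAdd (((2 * m : ℤ) : ZMod (4 * m))))⁻¹
          = SemidirectProduct.inl (phi m r (ofAdd (((2 * m : ℤ) : ZMod (4 * m))))
              (ofAdd ((-(r:ℤ) : ZMod (2 * r))))) := (SemidirectProduct.inl_aut _ _).symm
      rw [show phi m r (ofAdd (((2 * m : ℤ) : ZMod (4 * m)))) = 1 from phi_even m r m] at h1
      have h2 := congrArg (· * SemidirectProduct.inr
        (ofAdd (((2 * m : ℤ) : ZMod (4 * m))))) h1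
      simp only [map_inv, inv_mul_cancel_right] at h2
      rw [h2, zz, SemidirectProduct.mk_eq_inl_mul_inr]
      rfl
    rw [key]
    exact (QuotientGroup.eq_one_iff _).mpr (Subgroup.mem_zpowers _)

def phiP : P →* Q := PresentedGroup.toGroup (fgen_rels m r)

end Iso

section Final

variable (m r : ℕ)

local notation "NN" => Multiplicative (ZMod (2 * r))
local notation "HH" => Multiplicative (ZMod (4 * m))
local notation "G0" => SemidirectProduct NN HH (phi m r)
local notation "P" => PresentedGroup (metacyclicRels m (r : ℤ))
local notation "Q" => SemidirectProduct NN HH (phi m r) ⧸ ZZ m r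

lemma psi_phiP : (psi m r).comp (phiP m r) = MonoidHom.id _ := by
  apply PresentedGroup.ext
  intro x
  have e2 : (1 : ZMod (2 * r)) = ((1 : ℤ) : ZMod (2 * r)) := by norm_num
  have e4 : (1 : ZMod (4 * m)) = ((1 : ℤ) : ZMod (4 * m)) := by norm_num
  fin_cases x
  · show psi m r (phiP m r (PresentedGroup.of 0)) = PresentedGroup.of 0
    rw [phiP, PresentedGroup.toGroup.of]
    show psi m r (QuotientGroup.mk (SemidirectProduct.inr (ofAdd (1 : ZMod (4 * m)))))
      = PresentedGroup.of 0
    rw [psi, QuotientGroup.lift_mk, psi0, SemidirectProduct.lift_inr, fH, e4,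
      expHom_intCast, zpow_one]
    rfl
  · show psi m r (phiP m r (PresentedGroup.of 1)) = PresentedGroup.of 1
    rw [phiP, PresentedGroup.toGroup.of]
    show psi m r (QuotientGroup.mk (SemidirectProduct.inl (ofAdd (1 : ZMod (2 * r)))))
      = PresentedGroup.of 1
    rw [psi, QuotientGroup.lift_mk, psi0, SemidirectProduct.lift_inl, fN, e2,
      expHom_intCast, zpow_one]
    rfl

lemma phiP_psi : (phiP m r).comp (psi m r) = MonoidHom.id _ := by
  have e2 : (1 : ZMod (2 * r)) = ((1 : ℤ) : ZMod (2 * r)) := by norm_num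
  have e4 : (1 : ZMod (4 * m)) = ((1 : ℤ) : ZMod (4 * m)) := by norm_num
  apply QuotientGroup.monoidHom_ext
  apply SemidirectProduct.hom_ext
  · apply zmodHom_ext
    show phiP m r (psi m r (QuotientGroup.mk (SemidirectProduct.inl (ofAdd (1 : ZMod (2 * r))))))
      = QuotientGroup.mk (SemidirectProduct.inl (ofAdd (1 : ZMod (2 * r))))
    rw [psi, QuotientGroup.lift_mk, psi0, SemidirectProduct.lift_inl, fN, e2,
      expHom_intCast, zpow_one]
    show phiP m r (PresentedGroup.of 1) = _
    rw [phiP, PresentedGroup.toGroup.of, ← e2]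
    simp [fgen]
  · apply zmodHom_ext
    show phiP m r (psi m r (QuotientGroup.mk (SemidirectProduct.inr (ofAdd (1 : ZMod (4 * m))))))
      = QuotientGroup.mk (SemidirectProduct.inr (ofAdd (1 : ZMod (4 * m))))
    rw [psi, QuotientGroup.lift_mk, psi0, SemidirectProduct.lift_inr, fH, e4,
      expHom_intCast, zpow_one]
    show phiP m r (PresentedGroup.of 0) = _
    rw [phiP, PresentedGroup.toGroup.of, ← e4]
    simp [fgen]

def isoPQ : PresentedGroup (metacyclicRels m (r : ℤ)) ≃* (SemidirectProduct NN HH (phi m r) ⧸ ZZ m r) :=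
  MonoidHom.toMulEquiv (phiP m r) (psi m r) (psi_phiP m r) (phiP_psi m r)

theorem final (hm : 0 < m) (hr : 0 < r) :
    Finite P ∧ Nat.card P = 4 * m * r := by
  haveI : NeZero (2 * r) := ⟨by omega⟩
  haveI : NeZero (4 * m) := ⟨by omega⟩
  have e : SemidirectProduct NN HH (phi m r) ≃ (ZMod (2 * r)) × (ZMod (4 * m)) :=
    ⟨fun g => (g.left.toAdd, g.right.toAdd), fun p => ⟨ofAdd p.1, ofAdd p.2⟩,
      fun g => rfl, fun p => rfl⟩
  haveI : Finite (SemidirectProduct NN HH (phi m r)) := Finite.of_equiv _ e.symm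
  haveI hQfin : Finite Q :=
    Finite.of_surjective (QuotientGroup.mk (s := ZZ m r)) (QuotientGroup.mk_surjective)
  have cardG0 : Nat.card (SemidirectProduct NN HH (phi m r)) = (2 * r) * (4 * m) := by
    rw [Nat.card_congr e, Nat.card_prod, Nat.card_zmod, Nat.card_zmod]
  have hord : orderOf (zz m r) = 2 := by
    apply orderOf_eq_prime
    · rw [pow_two]; exact zz_sq m r
    · exact zz_ne_one m r hm
  have cardZZ : Nat.card (ZZ m r) = 2 := by
    rw [ZZ, Nat.card_zpowers, hord]
  have lag := Subgroup.card_eq_card_quotient_mul_card_subgroup (ZZ m r)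
  rw [cardG0, cardZZ] at lag
  have cardQ : Nat.card Q = 4 * m * r := by
    have h8 : (2 * r) * (4 * m) = (4 * m * r) * 2 := by ring
    rw [h8] at lag
    exact (Nat.eq_of_mul_eq_mul_right (by norm_num) lag.symm)
  constructor
  · exact Finite.of_equiv _ (isoPQ m r).symm.toEquiv
  · rw [Nat.card_congr (isoPQ m r).toEquiv, cardQ]

end Final

theorem metacyclic_presentedGroup_finite_card (m r : ℕ) (hm : 0 < m) (hr : 0 < r)
    (hmr : Nat.Coprime m r) :
    Finite (PresentedGroup (metacyclicRels m (r : ℤ)))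
      ∧ Nat.card (PresentedGroup (metacyclicRels m (r : ℤ))) = 4 * m * r := by
  exact final m r hm hr
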